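/- Suppose sup_x |F_n(x) − H_n(x)| → 0 in probability and sup_x |H_n(x) − H(x)| → 0 where H is a continuous strictly increasing CDF. Define F_n^{-1}(u) = inf{x : F_n(x) ≥ u} and F̃_n^{-1}(u) = sup{x : F_n(x) ≤ u}. Then for every u ∈ (0,1), both F_n^{-1}(u) and F̃_n^{-1}(u) converge in probability to H^{-1}(u). -/

import Mathlib

open MeasureTheory Filter

/-- Two-sided quantile convergence: if `sup_x |Fₙ(x) − Hₙ(x)| → 0` in probability and
`sup_x |Hₙ(x) − H(x)| → 0` with `H` a continuous strictly increasing CDF, then for every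
`u ∈ (0,1)` both `Fₙ⁻¹(u) = inf{x : Fₙ(x) ≥ u}` and `F̃ₙ⁻¹(u) = sup{x : Fₙ(x) ≤ u}`
converge in probability to `H⁻¹(u)`. -/
theorem two_sided_quantile_convergence
    {Ω : Type*} [MeasurableSpace Ω] (μ : Measure Ω) [IsProbabilityMeasure μ]
    (F : ℕ → Ω → ℝ → ℝ) (Hn : ℕ → ℝ → ℝ) (H : ℝ → ℝ)
    (hFmono : ∀ n ω, Monotone (F n ω))
    (hFrange : ∀ n ω x, F n ω x ∈ Set.Icc (0:ℝ) 1)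
    (hHnMono : ∀ n, Monotone (Hn n))
    (hHnRC : ∀ n x, ContinuousWithinAt (Hn n) (Set.Ici x) x)
    (hHnBot : ∀ n, Tendsto (Hn n) atBot (nhds 0))
    (hHnTop : ∀ n, Tendsto (Hn n) atTop (nhds 1))
    (hHcont : Continuous H) (hHmono : StrictMono H)
    (hHBot : Tendsto H atBot (nhds 0)) (hHTop : Tendsto H atTop (nhds 1))
    -- sup_x |Fₙ(x) − Hₙ(x)| → 0 in probability
    (hFH : ∀ ε > (0:ℝ),
      Tendsto (fun n => μ {ω | ∃ x : ℝ, ε ≤ |F n ω x - Hn n x|}) atTop (nhds 0))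
    -- sup_x |Hₙ(x) − H(x)| → 0
    (hHnH : ∀ ε > (0:ℝ), ∀ᶠ n in atTop, ∀ x : ℝ, |Hn n x - H x| < ε)
    (u : ℝ) (hu : u ∈ Set.Ioo (0:ℝ) 1) (q : ℝ) (hq : H q = u) :
    (∀ ε > (0:ℝ),
        Tendsto (fun n => μ {ω | ε ≤ |sInf {x : ℝ | u ≤ F n ω x} - q|}) atTop (nhds 0)) ∧
      (∀ ε > (0:ℝ),
        Tendsto (fun n => μ {ω | ε ≤ |sSup {x : ℝ | F n ω x ≤ u} - q|}) atTop (nhds 0)) := by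
  have hbound : ∀ ε > (0:ℝ), ∃ δ > (0:ℝ), ∀ n ω,
      (∀ x, |Hn n x - H x| < δ) → ¬ (∃ x, δ ≤ |F n ω x - Hn n x|) →
      |sInf {x : ℝ | u ≤ F n ω x} - q| < ε ∧ |sSup {x : ℝ | F n ω x ≤ u} - q| < ε := by
    intro ε hε
    set ε' := ε/2 with hε'def
    have hε' : 0 < ε' := by positivity
    have hA : 0 < H (q+ε') - u := by
      have := hHmono (show q < q + ε' by linarith); linarith
    have hB : 0 < u - H (q-ε') := by
      have := hHmono (show q - ε' < q by linarith); linarith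
    refine ⟨min (H (q+ε') - u) (u - H (q-ε')) / 2, by positivity, ?_⟩
    intro n ω hHnx hF
    push_neg at hF
    set δ := min (H (q+ε') - u) (u - H (q-ε')) / 2 with hδdef
    have hFH' : ∀ x, |F n ω x - H x| < 2*δ := by
      intro x
      have h1 := hF x
      have h2 := hHnx x
      calc |F n ω x - H x| ≤ |F n ω x - Hn n x| + |Hn n x - H x| := abs_sub_le _ _ _
        _ < 2*δ := by linarith
    have hupper : u < F n ω (q+ε') := by
      have h := abs_lt.mp (hFH' (q+ε'))
      have h2 : 2*δ ≤ H (q+ε') - u := by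
        have := min_le_left (H (q+ε') - u) (u - H (q-ε')); rw [hδdef]; linarith
      linarith [h.1]
    have hlower : F n ω (q-ε') < u := by
      have h := abs_lt.mp (hFH' (q-ε'))
      have h2 : 2*δ ≤ u - H (q-ε') := by
        have := min_le_right (H (q+ε') - u) (u - H (q-ε')); rw [hδdef]; linarith
      linarith [h.2]
    constructor
    · have hmem : q + ε' ∈ {x : ℝ | u ≤ F n ω x} := le_of_lt hupper
      have hlb : ∀ y ∈ {x : ℝ | u ≤ F n ω x}, q - ε' ≤ y := by
        intro y hy
        by_contra h
        push_neg at h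
        have hm : F n ω y ≤ F n ω (q-ε') := hFmono n ω h.le
        simp only [Set.mem_setOf_eq] at hy
        linarith
      have h1 : sInf {x : ℝ | u ≤ F n ω x} ≤ q + ε' := csInf_le ⟨q-ε', hlb⟩ hmem
      have h2 : q - ε' ≤ sInf {x : ℝ | u ≤ F n ω x} := le_csInf ⟨_, hmem⟩ hlb
      rw [abs_lt]; constructor <;> linarith
    · have hmem : q - ε' ∈ {x : ℝ | F n ω x ≤ u} := le_of_lt hlower
      have hub : ∀ y ∈ {x : ℝ | F n ω x ≤ u}, y ≤ q + ε' := by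
        intro y hy
        by_contra h
        push_neg at h
        have hm : F n ω (q+ε') ≤ F n ω y := hFmono n ω h.le
        simp only [Set.mem_setOf_eq] at hy
        linarith
      have h1 : sSup {x : ℝ | F n ω x ≤ u} ≤ q + ε' := csSup_le ⟨_, hmem⟩ hub
      have h2 : q - ε' ≤ sSup {x : ℝ | F n ω x ≤ u} := le_csSup ⟨q+ε', hub⟩ hmem
      rw [abs_lt]; constructor <;> linarith
  constructor
  · intro ε hε
    obtain ⟨δ, hδ, hkey⟩ := hbound ε hε
    have hsq : ∀ᶠ n in atTop, μ {ω | ε ≤ |sInf {x : ℝ | u ≤ F n ω x} - q|}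
        ≤ μ {ω | ∃ x : ℝ, δ ≤ |F n ω x - Hn n x|} := by
      filter_upwards [hHnH δ hδ] with n hn
      apply measure_mono
      intro ω hω
      by_contra h
      exact absurd (not_le.mpr ((hkey n ω hn h).1)) (not_not.mpr hω)
    exact tendsto_of_tendsto_of_tendsto_of_le_of_le' tendsto_const_nhds (hFH δ hδ)
      (Eventually.of_forall fun n => zero_le) hsq
  · intro ε hε
    obtain ⟨δ, hδ, hkey⟩ := hbound ε hε
    have hsq : ∀ᶠ n in atTop, μ {ω | ε ≤ |sSup {x : ℝ | F n ω x ≤ u} - q|}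
        ≤ μ {ω | ∃ x : ℝ, δ ≤ |F n ω x - Hn n x|} := by
      filter_upwards [hHnH δ hδ] with n hn
      apply measure_mono
      intro ω hω
      by_contra h
      exact absurd (not_le.mpr ((hkey n ω hn h).2)) (not_not.mpr hω)
    exact tendsto_of_tendsto_of_tendsto_of_le_of_le' tendsto_const_nhds (hFH δ hδ)
      (Eventually.of_forall fun n => zero_le) hsq
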